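/- Let (i_n) and (j_n) be sequences of positive integers such that i_n + j_n → ∞ and i_n/(i_n + j_n) → q for some q ∈ [0,1]. Then for every continuous function h : [0,1] → ℝ, the integrals ∫₀¹ h dβ_{i_n,j_n} converge to h(q) as n → ∞. -/

import Mathlib

open MeasureTheory

/-- The normalizing constant `B(i,j) = (i-1)!(j-1)!/(i+j-1)!` of the Beta distribution. -/
noncomputable def betaB (i j : ℕ) : ℝ :=
  (((i - 1).factorial : ℝ) * ((j - 1).factorial : ℝ)) / ((i + j - 1).factorial : ℝ)

/-- The Beta(i,j) probability measure on `[0,1] ⊆ ℝ`, given by the density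
`p ↦ p^(i-1) (1-p)^(j-1) / B(i,j)` with respect to Lebesgue measure on `[0,1]`. -/
noncomputable def betaMeasure (i j : ℕ) : Measure ℝ :=
  (volume.restrict (Set.Icc (0:ℝ) 1)).withDensity
    (fun p => ENNReal.ofReal (p ^ (i - 1) * (1 - p) ^ (j - 1) / betaB i j))

open Filter

open intervalIntegral
open scoped ENNReal NNReal

noncomputable def betaD (i j : ℕ) (x : ℝ) : ℝ := x ^ (i-1) * (1-x) ^ (j-1) / betaB i j

lemma aux_int (b a : ℕ) : ∫ x in (0:ℝ)..1, x ^ a * (1 - x) ^ b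
    = (a.factorial * b.factorial : ℝ) / ((a + b + 1).factorial) := by
  induction b generalizing a with
  | zero =>
    simp only [pow_zero, mul_one, integral_pow]
    rw [show a + 0 + 1 = a + 1 by ring, Nat.factorial_succ]
    have : ((a:ℝ)+1) ≠ 0 := by positivity
    push_cast
    field_simp
    simp
  | succ b ih =>
    have hu : ∀ x ∈ Set.uIcc (0:ℝ) 1, HasDerivAt (fun y => (1 - y) ^ (b+1))
        (-((b+1:ℕ):ℝ) * (1 - x) ^ b) x := by
      intro x _
      have h1 : HasDerivAt (fun y : ℝ => 1 - y) (-1) x := (hasDerivAt_id x).const_sub 1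
      have h2 := (hasDerivAt_pow (b+1) (1 - x)).comp x h1
      refine h2.congr_deriv ?_
      simp only [Nat.add_sub_cancel]
      push_cast; ring
    have hv : ∀ x ∈ Set.uIcc (0:ℝ) 1, HasDerivAt (fun y => y ^ (a+1) / ((a:ℝ)+1))
        (x ^ a) x := by
      intro x _
      have h2 := (hasDerivAt_pow (a+1) x).div_const ((a:ℝ)+1)
      refine h2.congr_deriv ?_
      simp only [Nat.add_sub_cancel]
      have : ((a:ℝ)+1) ≠ 0 := by positivity
      push_cast
      field_simp
    have hiu : IntervalIntegrable (fun x : ℝ => -((b+1:ℕ):ℝ) * (1 - x) ^ b) volume 0 1 :=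
      (Continuous.intervalIntegrable (by continuity) 0 1)
    have hiv : IntervalIntegrable (fun x : ℝ => x ^ a) volume 0 1 :=
      (Continuous.intervalIntegrable (by continuity) 0 1)
    have parts := intervalIntegral.integral_mul_deriv_eq_deriv_mul hu hv hiu hiv
    have comm : ∫ x in (0:ℝ)..1, x ^ a * (1 - x) ^ (b+1)
        = ∫ x in (0:ℝ)..1, (1 - x) ^ (b+1) * x ^ a := by
      congr 1; ext x; ring
    rw [comm, parts]
    simp only [one_pow, sub_self, zero_pow, Nat.succ_ne_zero, ne_eq]
    have key : ∫ x in (0:ℝ)..1, (-((b+1:ℕ):ℝ) * (1 - x) ^ b) * (x ^ (a+1) / ((a:ℝ)+1))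
        = (-((b+1:ℕ):ℝ) / ((a:ℝ)+1)) * ∫ x in (0:ℝ)..1, x ^ (a+1) * (1 - x) ^ b := by
      rw [← intervalIntegral.integral_const_mul]
      congr 1; ext x; ring
    rw [key, ih (a+1)]
    have h1 : ((a:ℝ)+1) ≠ 0 := by positivity
    have h2 : ((a + b + 2).factorial : ℝ) ≠ 0 := by positivity
    have e1 : (a + 1) + b + 1 = a + b + 2 := by ring
    have e2 : a + (b + 1) + 1 = a + b + 2 := by ring
    rw [e1, e2, Nat.factorial_succ (a:ℕ), Nat.factorial_succ b]
    push_cast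
    field_simp
    ring

lemma betaB_pos (i j : ℕ) : 0 < betaB i j := by
  unfold betaB
  positivity

/-- The density as a real function. -/

lemma betaD_cont (i j : ℕ) : Continuous (betaD i j) := by
  unfold betaD
  fun_prop

lemma betaD_nonneg (i j : ℕ) {x : ℝ} (hx : x ∈ Set.Icc (0:ℝ) 1) : 0 ≤ betaD i j x := by
  have := betaB_pos i j
  have h1 : (0:ℝ) ≤ x := hx.1
  have h2 : (0:ℝ) ≤ 1 - x := by linarith [hx.2]
  unfold betaD
  positivity

lemma beta_integral_eq (i j : ℕ) (g : ℝ → ℝ) :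
    ∫ x, g x ∂(betaMeasure i j) = ∫ x in Set.Icc (0:ℝ) 1, g x * betaD i j x := by
  have hmeas : Measurable (fun p : ℝ => (betaD i j p).toNNReal) :=
    ((betaD_cont i j).measurable).real_toNNReal
  have hrw : betaMeasure i j = (volume.restrict (Set.Icc (0:ℝ) 1)).withDensity
      (fun p => ((fun p : ℝ => (betaD i j p).toNNReal) p : ℝ≥0∞)) := by
    rfl
  rw [hrw, integral_withDensity_eq_integral_smul hmeas]
  refine setIntegral_congr_fun measurableSet_Icc (fun x hx => ?_)
  have := betaD_nonneg i j hx
  simp [NNReal.smul_def, Real.coe_toNNReal _ this, mul_comm]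

lemma moment (i j k : ℕ) (hi : 1 ≤ i) (hj : 1 ≤ j) :
    ∫ x in Set.Icc (0:ℝ) 1, x ^ k * betaD i j x
    = (((i-1+k).factorial : ℝ) * ((i+j-1).factorial : ℝ))
      / (((i-1).factorial : ℝ) * ((i+j-1+k).factorial : ℝ)) := by
  have hB := betaB_pos i j
  have e1 : ∀ x : ℝ, x ^ k * betaD i j x = (x ^ (i-1+k) * (1-x) ^ (j-1)) * (1 / betaB i j) := by
    intro x; unfold betaD; rw [pow_add]; ring
  simp only [e1]
  rw [MeasureTheory.integral_mul_const, MeasureTheory.integral_Icc_eq_integral_Ioc,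
    ← intervalIntegral.integral_of_le (by norm_num : (0:ℝ) ≤ 1), aux_int]
  have hab : i + j - 1 = (i-1) + (j-1) + 1 := by omega
  have hab2 : i + j - 1 + k = (i-1+k) + (j-1) + 1 := by omega
  rw [hab2, hab]
  have f1 : (((i-1).factorial : ℝ)) ≠ 0 := by positivity
  have f2 : (((j-1).factorial : ℝ)) ≠ 0 := by positivity
  have f3 : ((((i-1)+(j-1)+1).factorial : ℝ)) ≠ 0 := by positivity
  have f4 : ((((i-1+k)+(j-1)+1).factorial : ℝ)) ≠ 0 := by positivity
  unfold betaB
  rw [hab]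
  field_simp

lemma m0 (i j : ℕ) (hi : 1 ≤ i) (hj : 1 ≤ j) :
    ∫ x in Set.Icc (0:ℝ) 1, betaD i j x = 1 := by
  have := moment i j 0 hi hj
  simp only [pow_zero, one_mul, Nat.add_zero] at this
  rw [this]
  have f1 : (((i-1).factorial : ℝ)) ≠ 0 := by positivity
  have f3 : (((i+j-1).factorial : ℝ)) ≠ 0 := by positivity
  field_simp

lemma m1 (i j : ℕ) (hi : 1 ≤ i) (hj : 1 ≤ j) :
    ∫ x in Set.Icc (0:ℝ) 1, x * betaD i j x = (i : ℝ) / ((i : ℝ) + (j : ℝ)) := by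
  have := moment i j 1 hi hj
  simp only [pow_one] at this
  rw [this]
  have e1 : i - 1 + 1 = i := by omega
  have e2 : i + j - 1 + 1 = i + j := by omega
  have h1 : i.factorial = i * (i-1).factorial := by
    conv_lhs => rw [show i = (i-1)+1 by omega]
    rw [Nat.factorial_succ, e1]
  have h2 : (i+j).factorial = (i+j) * (i+j-1).factorial := by
    conv_lhs => rw [show i+j = (i+j-1)+1 by omega]
    rw [Nat.factorial_succ, e2]
  rw [e1, e2, h1, h2]
  have f1 : (((i-1).factorial : ℝ)) ≠ 0 := by positivity
  have f3 : (((i+j-1).factorial : ℝ)) ≠ 0 := by positivity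
  have hi' : (1:ℝ) ≤ (i:ℝ) := by exact_mod_cast hi
  have hj' : (1:ℝ) ≤ (j:ℝ) := by exact_mod_cast hj
  have f5 : ((i:ℝ) + (j:ℝ)) ≠ 0 := by linarith
  push_cast
  field_simp

lemma m2 (i j : ℕ) (hi : 1 ≤ i) (hj : 1 ≤ j) :
    ∫ x in Set.Icc (0:ℝ) 1, x ^ 2 * betaD i j x
    = ((i : ℝ) * ((i : ℝ) + 1)) / (((i : ℝ) + (j : ℝ)) * ((i : ℝ) + (j : ℝ) + 1)) := by
  have := moment i j 2 hi hj
  rw [this]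
  have e1 : i - 1 + 1 = i := by omega
  have e2 : i + j - 1 + 1 = i + j := by omega
  have h1 : i.factorial = i * (i-1).factorial := by
    conv_lhs => rw [show i = (i-1)+1 by omega]
    rw [Nat.factorial_succ, e1]
  have h2 : (i+j).factorial = (i+j) * (i+j-1).factorial := by
    conv_lhs => rw [show i+j = (i+j-1)+1 by omega]
    rw [Nat.factorial_succ, e2]
  have g1 : (i-1+2).factorial = (i+1) * (i * (i-1).factorial) := by
    rw [show i-1+2 = i+1 by omega, Nat.factorial_succ, h1]
  have g2 : (i+j-1+2).factorial = (i+j+1) * ((i+j) * (i+j-1).factorial) := by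
    rw [show i+j-1+2 = (i+j)+1 by omega, Nat.factorial_succ, h2]
  rw [g1, g2]
  have f1 : (((i-1).factorial : ℝ)) ≠ 0 := by positivity
  have f3 : (((i+j-1).factorial : ℝ)) ≠ 0 := by positivity
  have hi' : (1:ℝ) ≤ (i:ℝ) := by exact_mod_cast hi
  have hj' : (1:ℝ) ≤ (j:ℝ) := by exact_mod_cast hj
  have f5 : ((i:ℝ) + (j:ℝ)) ≠ 0 := by linarith
  have f6 : ((i:ℝ) + (j:ℝ) + 1) ≠ 0 := by linarith
  push_cast
  field_simp

lemma betaVar (i j : ℕ) (hi : 1 ≤ i) (hj : 1 ≤ j) (q : ℝ) :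
    ∫ x in Set.Icc (0:ℝ) 1, (x - q) ^ 2 * betaD i j x
    = ((i : ℝ) * ((i : ℝ) + 1)) / (((i : ℝ) + (j : ℝ)) * ((i : ℝ) + (j : ℝ) + 1))
      - 2 * q * ((i : ℝ) / ((i : ℝ) + (j : ℝ))) + q ^ 2 := by
  have hInt2 : IntegrableOn (fun x : ℝ => x ^ 2 * betaD i j x) (Set.Icc 0 1) volume :=
    ((continuous_id.pow 2).mul (betaD_cont i j)).integrableOn_Icc
  have hInt1 : IntegrableOn (fun x : ℝ => x * betaD i j x) (Set.Icc 0 1) volume :=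
    (continuous_id.mul (betaD_cont i j)).integrableOn_Icc
  have hInt0 : IntegrableOn (betaD i j) (Set.Icc (0:ℝ) 1) volume :=
    (betaD_cont i j).integrableOn_Icc
  have hcong : ∀ x ∈ Set.Icc (0:ℝ) 1, (x - q) ^ 2 * betaD i j x
      = (x ^ 2 * betaD i j x - 2 * q * (x * betaD i j x)) + q ^ 2 * betaD i j x := by
    intro x _; ring
  have hB : Integrable (fun x : ℝ => 2 * q * (x * betaD i j x))
      (volume.restrict (Set.Icc 0 1)) := hInt1.const_mul (2 * q)
  have hA : Integrable (fun x : ℝ => x ^ 2 * betaD i j x - 2 * q * (x * betaD i j x))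
      (volume.restrict (Set.Icc 0 1)) := hInt2.sub hB
  have hC : Integrable (fun x : ℝ => q ^ 2 * betaD i j x)
      (volume.restrict (Set.Icc 0 1)) := hInt0.const_mul (q ^ 2)
  rw [setIntegral_congr_fun measurableSet_Icc hcong, integral_add hA hC,
    integral_sub hInt2 hB, MeasureTheory.integral_const_mul, MeasureTheory.integral_const_mul,
    m0 i j hi hj, m1 i j hi hj, m2 i j hi hj]
  ring

open Filter

/-- If `i_n + j_n → ∞` and `i_n/(i_n+j_n) → q`, then `∫ h dβ_{i_n,j_n} → h(q)` for every
continuous `h : [0,1] → ℝ`. -/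
theorem betaMeasure_tendsto_dirac (i j : ℕ → ℕ) (hi : ∀ n, 1 ≤ i n) (hj : ∀ n, 1 ≤ j n)
    (hsum : Tendsto (fun n => i n + j n) atTop atTop)
    (q : ℝ) (hq : q ∈ Set.Icc (0:ℝ) 1)
    (hratio : Tendsto (fun n => (i n : ℝ) / ((i n : ℝ) + (j n : ℝ))) atTop (nhds q))
    (h : ℝ → ℝ) (hh : ContinuousOn h (Set.Icc 0 1)) :
    Tendsto (fun n => ∫ x, h x ∂(betaMeasure (i n) (j n))) atTop (nhds (h q)) := by
  -- notation
  set s : ℕ → ℝ := fun n => (i n : ℝ) + (j n : ℝ) with hs_def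
  have hipos : ∀ n, (1:ℝ) ≤ (i n : ℝ) := fun n => by exact_mod_cast hi n
  have hjpos : ∀ n, (1:ℝ) ≤ (j n : ℝ) := fun n => by exact_mod_cast hj n
  have hspos : ∀ n, 0 < s n := fun n => by have := hipos n; have := hjpos n; simp only [hs_def]; linarith
  have hs : Tendsto s atTop atTop := by
    have h1 := tendsto_natCast_atTop_atTop (R := ℝ) |>.comp hsum
    have : (fun n => ((i n + j n : ℕ) : ℝ)) = s := by
      funext n; push_cast; rfl
    rwa [Function.comp_def, this] at h1
  -- limits of moments
  have hs1 : Tendsto (fun n => s n + 1) atTop atTop :=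
    tendsto_atTop_add_const_right atTop 1 hs
  have hinv : Tendsto (fun n => (s n + 1)⁻¹) atTop (nhds 0) :=
    tendsto_inv_atTop_zero.comp hs1
  have hfrac : Tendsto (fun n => s n / (s n + 1)) atTop (nhds 1) := by
    have h2 : Tendsto (fun n => 1 - (s n + 1)⁻¹) atTop (nhds (1 - 0)) :=
      tendsto_const_nhds.sub hinv
    rw [sub_zero] at h2
    refine h2.congr (fun n => ?_)
    have h1 : s n + 1 ≠ 0 := by have := hspos n; linarith
    field_simp
    ring
  have hm1' : Tendsto (fun n => ((i n : ℝ) + 1) / (s n + 1)) atTop (nhds q) := by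
    have h2 : Tendsto (fun n => ((i n : ℝ) / s n) * (s n / (s n + 1)) + (s n + 1)⁻¹)
        atTop (nhds (q * 1 + 0)) := (hratio.mul hfrac).add hinv
    rw [mul_one, add_zero] at h2
    refine h2.congr (fun n => ?_)
    have h0 := hspos n
    have h1 : s n ≠ 0 := ne_of_gt h0
    have h3 : s n + 1 ≠ 0 := by linarith
    field_simp
  have hV : Tendsto (fun n => (i n : ℝ) * ((i n : ℝ) + 1) / (s n * (s n + 1))
      - 2 * q * ((i n : ℝ) / s n) + q ^ 2) atTop (nhds 0) := by
    have h2 : Tendsto (fun n => ((i n : ℝ) / s n) * (((i n : ℝ) + 1) / (s n + 1))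
        - 2 * q * ((i n : ℝ) / s n) + q ^ 2)
        atTop (nhds (q * q - 2 * q * q + q ^ 2)) :=
      ((hratio.mul hm1').sub (tendsto_const_nhds.mul hratio)).add tendsto_const_nhds
    have heq : q * q - 2 * q * q + q ^ 2 = 0 := by ring
    rw [heq] at h2
    refine h2.congr (fun n => ?_)
    have h0 := hspos n
    have h1 : s n ≠ 0 := ne_of_gt h0
    have h3 : s n + 1 ≠ 0 := by linarith
    field_simp
  -- constants
  obtain ⟨M, hM⟩ := isCompact_Icc.exists_bound_of_continuousOn hh
  have hM0 : 0 ≤ M := le_trans (norm_nonneg _) (hM q hq)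
  have hUC := isCompact_Icc.uniformContinuousOn_of_continuous hh
  rw [Metric.uniformContinuousOn_iff] at hUC
  rw [Metric.tendsto_atTop]
  intro ε hε
  obtain ⟨δ, hδ0, hδ⟩ := hUC (ε / 2) (by positivity)
  set C := 2 * M / δ ^ 2 with hC
  have hC0 : 0 ≤ C := by positivity
  have hCV : Tendsto (fun n => C * ((i n : ℝ) * ((i n : ℝ) + 1) / (s n * (s n + 1))
      - 2 * q * ((i n : ℝ) / s n) + q ^ 2)) atTop (nhds 0) := by
    simpa using hV.const_mul C
  obtain ⟨N, hN⟩ := (Metric.tendsto_atTop.mp hCV) (ε / 2) (by positivity)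
  refine ⟨N, fun n hn => ?_⟩
  set V : ℝ := (i n : ℝ) * ((i n : ℝ) + 1) / (s n * (s n + 1))
      - 2 * q * ((i n : ℝ) / s n) + q ^ 2 with hVdef
  have hVlt : C * V < ε / 2 := by
    have := hN n hn
    rw [Real.dist_eq, sub_zero] at this
    calc C * V ≤ |C * V| := le_abs_self _
      _ < ε / 2 := this
  -- the estimate for fixed n
  show dist (∫ x, h x ∂(betaMeasure (i n) (j n))) (h q) < ε
  rw [beta_integral_eq (i n) (j n) h]
  set d : ℝ → ℝ := betaD (i n) (j n) with hd_def
  have hdc : Continuous d := betaD_cont _ _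
  have hdnn : ∀ x ∈ Set.Icc (0:ℝ) 1, 0 ≤ d x := fun x hx => betaD_nonneg _ _ hx
  have hIhd : IntegrableOn (fun x => h x * d x) (Set.Icc (0:ℝ) 1) volume :=
    (hh.mul hdc.continuousOn).integrableOn_Icc
  have hI0 : IntegrableOn d (Set.Icc (0:ℝ) 1) volume := hdc.integrableOn_Icc
  have habs : IntegrableOn (fun x => |h x - h q| * d x) (Set.Icc (0:ℝ) 1) volume :=
    (((hh.sub continuousOn_const).abs).mul hdc.continuousOn).integrableOn_Icc
  have hbd : IntegrableOn (fun x => (ε / 2 + C * (x - q) ^ 2) * d x) (Set.Icc (0:ℝ) 1) volume := by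
    apply ContinuousOn.integrableOn_Icc
    apply ContinuousOn.mul _ hdc.continuousOn
    fun_prop
  have hm0' : ∫ x in Set.Icc (0:ℝ) 1, d x = 1 := m0 _ _ (hi n) (hj n)
  have hsub : (∫ x in Set.Icc (0:ℝ) 1, h x * d x) - h q
      = ∫ x in Set.Icc (0:ℝ) 1, (h x - h q) * d x := by
    have h2 : ∫ x in Set.Icc (0:ℝ) 1, (h x - h q) * d x
        = (∫ x in Set.Icc (0:ℝ) 1, h x * d x) - ∫ x in Set.Icc (0:ℝ) 1, h q * d x := by
      rw [← integral_sub hIhd (hI0.const_mul (h q))]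
      congr 1; funext x; ring
    have h3 : ∫ x in Set.Icc (0:ℝ) 1, h q * d x = h q := by
      rw [MeasureTheory.integral_const_mul, hm0', mul_one]
    rw [h2, h3]
  rw [Real.dist_eq, hsub]
  have step1 : |∫ x in Set.Icc (0:ℝ) 1, (h x - h q) * d x|
      ≤ ∫ x in Set.Icc (0:ℝ) 1, |h x - h q| * d x := by
    have hle := MeasureTheory.norm_integral_le_integral_norm (μ := volume.restrict (Set.Icc (0:ℝ) 1))
      (f := fun x => (h x - h q) * d x)
    rw [Real.norm_eq_abs] at hle
    refine hle.trans (le_of_eq ?_)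
    refine setIntegral_congr_fun measurableSet_Icc (fun x hx => ?_)
    rw [Real.norm_eq_abs, abs_mul, abs_of_nonneg (hdnn x hx)]
  have step2 : ∫ x in Set.Icc (0:ℝ) 1, |h x - h q| * d x
      ≤ ∫ x in Set.Icc (0:ℝ) 1, (ε / 2 + C * (x - q) ^ 2) * d x := by
    refine setIntegral_mono_on habs hbd measurableSet_Icc (fun x hx => ?_)
    refine mul_le_mul_of_nonneg_right ?_ (hdnn x hx)
    by_cases hxq : dist x q < δ
    · have hlt := hδ x hx q hq hxq
      rw [Real.dist_eq] at hlt
      nlinarith [sq_nonneg (x - q)]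
    · push_neg at hxq
      rw [Real.dist_eq] at hxq
      have hsq : δ ^ 2 ≤ (x - q) ^ 2 := by
        have := abs_nonneg (x - q)
        nlinarith [sq_abs (x - q)]
      have h2M : |h x - h q| ≤ 2 * M := by
        have h1 := hM x hx
        have h2 := hM q hq
        rw [Real.norm_eq_abs] at h1 h2
        calc |h x - h q| ≤ |h x| + |h q| := abs_sub _ _
          _ ≤ 2 * M := by linarith
      have hCδ : C * δ ^ 2 = 2 * M := by
        rw [hC]; field_simp
      have hCm : C * δ ^ 2 ≤ C * (x - q) ^ 2 := mul_le_mul_of_nonneg_left hsq hC0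
      linarith
  have step3 : ∫ x in Set.Icc (0:ℝ) 1, (ε / 2 + C * (x - q) ^ 2) * d x = ε / 2 + C * V := by
    have hcong : ∀ x ∈ Set.Icc (0:ℝ) 1, (ε / 2 + C * (x - q) ^ 2) * d x
        = (ε / 2) * d x + C * ((x - q) ^ 2 * d x) := by
      intro x _; ring
    have hIsq : Integrable (fun x : ℝ => C * ((x - q) ^ 2 * d x))
        (volume.restrict (Set.Icc (0:ℝ) 1)) :=
      (((continuous_id.sub continuous_const).pow 2).mul hdc).integrableOn_Icc.const_mul C
    have hIc : Integrable (fun x : ℝ => (ε / 2) * d x)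
        (volume.restrict (Set.Icc (0:ℝ) 1)) := hI0.const_mul (ε / 2)
    rw [setIntegral_congr_fun measurableSet_Icc hcong, integral_add hIc hIsq,
      MeasureTheory.integral_const_mul, MeasureTheory.integral_const_mul, hm0',
      hd_def, betaVar (i n) (j n) (hi n) (hj n) q]
    rw [hVdef]
    ring
  calc |∫ x in Set.Icc (0:ℝ) 1, (h x - h q) * d x|
      ≤ ∫ x in Set.Icc (0:ℝ) 1, (ε / 2 + C * (x - q) ^ 2) * d x := step1.trans step2
    _ = ε / 2 + C * V := step3
    _ < ε := by linarith
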